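/- arXiv:1911.03767 — 2 statements merged into one kernel-verified Lean document; each statement's English description precedes it below -/
import Mathlib

section
/- Let X be a 2-based Banach space with constants c, C and natural parameterization r. Let s, v, α, β ∈ ℝ be such that r is differentiable at s and at v, r'(s) = r(v), and r'(v) = α·r(v) + β·r(s). Then |α| ≤ ((C + c)·C/c²)·|β|. -/
noncomputable section
open MeasureTheory Set Filter
open scoped ENNReal Topology

variable {X : Type*} [NormedAddCommGroup X] [NormedSpace ℝ X]

/-- `e^{it} = cos t • e₁ + sin t • e₂` for the basis `b 0, b 1`. -/
def expV (b : Module.Basis (Fin 2) ℝ X) (t : ℝ) : X :=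
  Real.cos t • b 0 + Real.sin t • b 1

/-- The polar parameterization `p(t) = e^{it}/‖e^{it}‖` of the unit sphere. -/
def polarParam (b : Module.Basis (Fin 2) ℝ X) (t : ℝ) : X :=
  ‖expV b t‖⁻¹ • expV b t

/-- The Euclidean norm `|x| = √(e₁*(x)² + e₂*(x)²)` associated to the basis. -/
def euclNorm (b : Module.Basis (Fin 2) ℝ X) (x : X) : ℝ :=
  Real.sqrt ((b.coord 0 x)^2 + (b.coord 1 x)^2)

/-- `c = min{‖x‖ : |x| = 1}`. -/
def cConst (b : Module.Basis (Fin 2) ℝ X) : ℝ :=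
  sInf (norm '' {x : X | euclNorm b x = 1})

/-- `C = max{‖x‖ : |x| = 1}`. -/
def CConst (b : Module.Basis (Fin 2) ℝ X) : ℝ :=
  sSup (norm '' {x : X | euclNorm b x = 1})

/-- The right derivative of a function `f : ℝ → X`. -/
def rightDeriv (f : ℝ → X) (t : ℝ) : X := derivWithin f (Ici t) t

/-- The left derivative of a function `f : ℝ → X`. -/
def leftDeriv (f : ℝ → X) (t : ℝ) : X := derivWithin f (Iic t) t

/-- The arc-length function `s(t) = ∫₀^t ‖p'₊(u)‖ du`. -/
def arcLen (b : Module.Basis (Fin 2) ℝ X) (t : ℝ) : ℝ :=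
  ∫ u in (0:ℝ)..t, ‖rightDeriv (polarParam b) u‖

/-- The half-length `L = s(π)` of the unit sphere. -/
def halfLen (b : Module.Basis (Fin 2) ℝ X) : ℝ := arcLen b Real.pi

/-- The inverse `t = s⁻¹` of the arc-length function. -/
def arcInv (b : Module.Basis (Fin 2) ℝ X) : ℝ → ℝ := Function.invFun (arcLen b)

/-- The natural parameterization `r = p ∘ t` of the unit sphere. -/
def natParam (b : Module.Basis (Fin 2) ℝ X) : ℝ → X := polarParam b ∘ arcInv b

/-- Local absolute continuity of `f` with a.e. derivative `f'`, in the sense that `f` is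
differentiable almost everywhere, `f'` is locally integrable, and `f` is recovered from `f'`
by integration. -/
def LocAC {E : Type*} [NormedAddCommGroup E] [NormedSpace ℝ E] [CompleteSpace E]
    (f f' : ℝ → E) : Prop :=
  (∀ᵐ t : ℝ, HasDerivAt f (f' t) t) ∧ LocallyIntegrable f' volume ∧
    ∀ a b : ℝ, a ≤ b → f b - f a = ∫ t in a..b, f' t

/-- `s` is a Lebesgue point of `g`. -/
def LebesguePoint {E : Type*} [NormedAddCommGroup E] (g : ℝ → E) (s : ℝ) : Prop :=
  Tendsto (fun ε : ℝ => (1/ε) * ∫ t in (0:ℝ)..ε, ‖g (s + t) - g s‖) (𝓝[≠] (0:ℝ)) (𝓝 0)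


lemma expV_ne_zero (b : Module.Basis (Fin 2) ℝ X) (t : ℝ) : expV b t ≠ 0 := by
  intro h
  have h0 : b.coord 0 (expV b t) = Real.cos t := by
    simp [expV, Module.Basis.coord_apply, Finsupp.single_apply]
  have h1 : b.coord 1 (expV b t) = Real.sin t := by
    simp [expV, Module.Basis.coord_apply, Finsupp.single_apply]
  rw [h] at h0 h1
  simp at h0 h1
  nlinarith [Real.sin_sq_add_cos_sq t]

lemma norm_polarParam (b : Module.Basis (Fin 2) ℝ X) (t : ℝ) : ‖polarParam b t‖ = 1 := by
  have h := expV_ne_zero b t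
  rw [polarParam, norm_smul, norm_inv, norm_norm,
    inv_mul_cancel₀ (norm_ne_zero_iff.2 h)]

lemma norm_natParam (b : Module.Basis (Fin 2) ℝ X) (t : ℝ) : ‖natParam b t‖ = 1 :=
  norm_polarParam b _

lemma euclSphere_compact (b : Module.Basis (Fin 2) ℝ X) :
    IsCompact {x : X | euclNorm b x = 1} := by
  haveI : FiniteDimensional ℝ X := Module.Finite.of_basis b
  haveI : ProperSpace X := FiniteDimensional.proper ℝ X
  have hcont : Continuous (euclNorm b) := by
    have h0 : Continuous fun x : X => (b.coord 0 x : ℝ) :=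
      (b.coord 0).continuous_of_finiteDimensional
    have h1 : Continuous fun x : X => (b.coord 1 x : ℝ) :=
      (b.coord 1).continuous_of_finiteDimensional
    exact ((h0.pow 2).add (h1.pow 2)).sqrt
  apply Metric.isCompact_of_isClosed_isBounded
  · exact isClosed_eq hcont continuous_const
  · rw [isBounded_iff_forall_norm_le]
    refine ⟨‖b 0‖ + ‖b 1‖, fun x hx => ?_⟩
    have hx' : Real.sqrt ((b.coord 0 x)^2 + (b.coord 1 x)^2) = 1 := hx
    have key : ∀ i : Fin 2, |b.coord i x| ≤ 1 := by
      intro i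
      have h2 : (b.coord i x)^2 ≤ (b.coord 0 x)^2 + (b.coord 1 x)^2 := by
        have h0 := sq_nonneg (b.coord 0 x)
        have h1 := sq_nonneg (b.coord 1 x)
        fin_cases i
        · show (b.coord 0 x)^2 ≤ _; linarith
        · show (b.coord 1 x)^2 ≤ _; linarith
      have := Real.sqrt_le_sqrt h2
      rwa [Real.sqrt_sq_eq_abs, hx'] at this
    have hrepr : x = b.coord 0 x • b 0 + b.coord 1 x • b 1 := by
      have := b.sum_repr x
      rw [Fin.sum_univ_two] at this
      simp only [Module.Basis.coord_apply]
      exact this.symm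
    calc ‖x‖ = ‖b.coord 0 x • b 0 + b.coord 1 x • b 1‖ := by rw [← hrepr]
      _ ≤ ‖b.coord 0 x • b 0‖ + ‖b.coord 1 x • b 1‖ := norm_add_le _ _
      _ = |b.coord 0 x| * ‖b 0‖ + |b.coord 1 x| * ‖b 1‖ := by
          rw [norm_smul, norm_smul, Real.norm_eq_abs, Real.norm_eq_abs]
      _ ≤ 1 * ‖b 0‖ + 1 * ‖b 1‖ := by
          gcongr
          · exact key 0
          · exact key 1
      _ = ‖b 0‖ + ‖b 1‖ := by ring

lemma euclSphere_nonempty (b : Module.Basis (Fin 2) ℝ X) :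
    ({x : X | euclNorm b x = 1} : Set X).Nonempty := by
  refine ⟨b 0, ?_⟩
  have h0 : b.coord 0 (b 0) = 1 := by simp [Module.Basis.coord_apply]
  have h1 : b.coord 1 (b 0) = 0 := by
    simp [Module.Basis.coord_apply, Finsupp.single_apply]
  simp [euclNorm, h0, h1, Set.mem_setOf_eq]

lemma cConst_pos (b : Module.Basis (Fin 2) ℝ X) : 0 < cConst b := by
  have hK : IsCompact (norm '' {x : X | euclNorm b x = 1}) :=
    (euclSphere_compact b).image continuous_norm
  have hne : (norm '' {x : X | euclNorm b x = 1}).Nonempty :=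
    (euclSphere_nonempty b).image _
  have hmem : cConst b ∈ norm '' {x : X | euclNorm b x = 1} :=
    hK.sInf_mem hne
  obtain ⟨x, hx, hxn⟩ := hmem
  have hx0 : x ≠ 0 := by
    intro h
    rw [h] at hx
    simp [euclNorm, Set.mem_setOf_eq] at hx
  rw [← hxn]
  exact norm_pos_iff.2 hx0

lemma cConst_le_CConst (b : Module.Basis (Fin 2) ℝ X) : cConst b ≤ CConst b := by
  have hK : IsCompact (norm '' {x : X | euclNorm b x = 1}) :=
    (euclSphere_compact b).image continuous_norm
  have hne : (norm '' {x : X | euclNorm b x = 1}).Nonempty :=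
    (euclSphere_nonempty b).image _
  have hmem : cConst b ∈ norm '' {x : X | euclNorm b x = 1} :=
    hK.sInf_mem hne
  exact le_csSup hK.bddAbove hmem

/-- If `r'(s) = r(v)` and `r'(v) = α·r(v) + β·r(s)`, then `|α| ≤ ((C+c)·C/c²)·|β|`. -/
theorem natParam_alpha_beta [CompleteSpace X] (b : Module.Basis (Fin 2) ℝ X)
    (s v α β : ℝ)
    (hs : DifferentiableAt ℝ (natParam b) s)
    (hv : DifferentiableAt ℝ (natParam b) v)
    (h1 : deriv (natParam b) s = natParam b v)
    (h2 : deriv (natParam b) v = α • natParam b v + β • natParam b s) :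
    |α| ≤ ((CConst b + cConst b) * CConst b / (cConst b)^2) * |β| := by
  -- Step 1: find a supporting functional at r(v)
  have hrv : ‖natParam b v‖ = 1 := norm_natParam b v
  have hrv0 : natParam b v ≠ 0 := by
    intro h; rw [h] at hrv; simp at hrv
  obtain ⟨f, hf1, hfv'⟩ := exists_dual_vector ℝ (natParam b v) (norm_ne_zero_iff.2 hrv0)
  have hfv : f (natParam b v) = 1 := by rw [hfv', hrv]; norm_num
  -- g = f ∘ r has a local max at v
  set g : ℝ → ℝ := fun t => f (natParam b t) with hg
  have hgle : ∀ t, g t ≤ g v := by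
    intro t
    have : g t ≤ ‖f‖ * ‖natParam b t‖ := (le_abs_self _).trans (f.le_opNorm _)
    rw [hf1, norm_natParam, mul_one] at this
    calc g t ≤ 1 := this
      _ = g v := by simp [hg, hfv]
  have hgd : HasDerivAt g (f (deriv (natParam b) v)) v :=
    f.hasFDerivAt.comp_hasDerivAt v hv.hasDerivAt
  have hmax : IsLocalMax g v := Filter.Eventually.of_forall hgle
  have hderiv0 : f (deriv (natParam b) v) = 0 := by
    have := hmax.deriv_eq_zero
    rwa [hgd.deriv] at this
  -- Step 2: derive α = -β * f(r s)
  rw [h2] at hderiv0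
  have hlin : α * f (natParam b v) + β * f (natParam b s) = 0 := by
    simp only [map_add, ContinuousLinearMap.map_smul, smul_eq_mul] at hderiv0
    exact hderiv0
  rw [hfv, mul_one] at hlin
  have hα : α = -(β * f (natParam b s)) := by linarith
  have hfs : |f (natParam b s)| ≤ 1 := by
    have : ‖f (natParam b s)‖ ≤ ‖f‖ * ‖natParam b s‖ := f.le_opNorm _
    rwa [hf1, norm_natParam, mul_one, Real.norm_eq_abs] at this
  have habs : |α| ≤ |β| := by
    rw [hα, abs_neg, abs_mul]
    calc |β| * |f (natParam b s)| ≤ |β| * 1 := by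
          exact mul_le_mul_of_nonneg_left hfs (abs_nonneg β)
      _ = |β| := mul_one _
  -- Step 3: the constant is at least 1
  have hc := cConst_pos b
  have hcC := cConst_le_CConst b
  have hone : 1 ≤ (CConst b + cConst b) * CConst b / (cConst b)^2 := by
    rw [le_div_iff₀ (by positivity)]
    nlinarith
  calc |α| ≤ |β| := habs
    _ = 1 * |β| := (one_mul _).symm
    _ ≤ ((CConst b + cConst b) * CConst b / (cConst b)^2) * |β| :=
        mul_le_mul_of_nonneg_right hone (abs_nonneg β)

end
end

section
/- Let X be a 2-based Banach space whose natural parameterization r has locally absolutely continuous derivative r', let L be the half-length of S_X, and let ρ, τ : ℝ → ℝ be locally integrable functions such that r''(s) = −ρ(s)·r(s) + τ(s)·r'(s) for almost every s ∈ ℝ and ρ(s) ≥ 0 for almost every s. Then ∫₀^L ρ(s) ds > 0. -/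
noncomputable section
open MeasureTheory Set Filter
open scoped ENNReal Topology

variable {X : Type*} [NormedAddCommGroup X] [NormedSpace ℝ X]

/-- Volterra-type uniqueness: a continuous function equal to its own
weighted integral vanishes. -/
theorem volterra_zero (φ k : ℝ → ℝ) (L : ℝ) (hL : 0 ≤ L)
    (hφ : Continuous φ)
    (hk : ∀ a b : ℝ, IntervalIntegrable k volume a b)
    (hint : ∀ s ∈ Icc 0 L, φ s = ∫ u in (0:ℝ)..s, k u * φ u) :
    ∀ s ∈ Icc 0 L, φ s = 0 := by
  have hkφ : ∀ a c : ℝ, IntervalIntegrable (fun u => k u * φ u) volume a c :=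
    fun a c => (hk a c).mul_continuousOn hφ.continuousOn
  have habs : ∀ a c : ℝ, IntervalIntegrable (fun u => |k u|) volume a c := fun a c => (hk a c).abs
  set A : Set ℝ := {s | s ∈ Icc 0 L ∧ ∀ u ∈ Icc 0 s, φ u = 0} with hA
  have hφ0 : φ 0 = 0 := by
    have := hint 0 ⟨le_refl 0, hL⟩
    simpa using this
  have h0A : (0:ℝ) ∈ A := ⟨⟨le_refl 0, hL⟩, fun u hu => by
    have : u = 0 := le_antisymm hu.2 hu.1
    simp [this, hφ0]⟩
  have hAne : A.Nonempty := ⟨0, h0A⟩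
  have hbdd : BddAbove A := ⟨L, fun x hx => hx.1.2⟩
  set σ := sSup A with hσdef
  have hσ0 : 0 ≤ σ := le_csSup hbdd h0A
  have hσL : σ ≤ L := csSup_le hAne (fun x hx => hx.1.2)
  -- φ vanishes on [0, σ)
  have hvan' : ∀ u, 0 ≤ u → u < σ → φ u = 0 := by
    intro u hu0 huσ
    obtain ⟨a, haA, hua⟩ := exists_lt_of_lt_csSup hAne huσ
    exact haA.2 u ⟨hu0, hua.le⟩
  -- φ vanishes on [0, σ]
  have hvan : ∀ u ∈ Icc 0 σ, φ u = 0 := by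
    intro u hu
    rcases lt_or_eq_of_le hu.2 with h | h
    · exact hvan' u hu.1 h
    · rcases eq_or_lt_of_le hσ0 with h0 | h0
      · rw [h, ← h0, hφ0]
      · have t1 : Tendsto φ (𝓝[<] σ) (𝓝 (φ σ)) :=
          (hφ.continuousAt).tendsto.mono_left nhdsWithin_le_nhds
        have heq : φ =ᶠ[𝓝[<] σ] (fun _ => (0:ℝ)) := by
          filter_upwards [Ioo_mem_nhdsLT_of_mem (show σ ∈ Ioc 0 σ from ⟨h0, le_rfl⟩)] with
            t ht
          exact hvan' t ht.1.le ht.2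
        have t2 : Tendsto φ (𝓝[<] σ) (𝓝 0) :=
          (tendsto_congr' heq).2 tendsto_const_nhds
        rw [h]
        exact tendsto_nhds_unique t1 t2
  -- now show σ = L
  have hσeq : σ = L := by
    by_contra hne
    have hσlt : σ < L := lt_of_le_of_ne hσL hne
    -- pick δ with ∫_σ^{σ+δ} |k| < 1/2
    have hKcont : Continuous (fun s : ℝ => ∫ u in σ..s, |k u|) :=
      intervalIntegral.continuous_primitive habs σ
    have hG : Tendsto (fun d : ℝ => ∫ u in σ..(σ + d), |k u|) (𝓝 0) (𝓝 0) := by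
      have h1 : Continuous (fun d : ℝ => σ + d) := continuous_const.add continuous_id
      have h2 := (hKcont.comp h1).tendsto 0
      simp only [Function.comp_def] at h2
      simpa using h2
    have hev : ∀ᶠ d in 𝓝 (0:ℝ), (∫ u in σ..(σ + d), |k u|) < 1/2 :=
      hG.eventually_lt_const (by norm_num)
    obtain ⟨ε, hε, hball⟩ := Metric.eventually_nhds_iff.1 hev
    set δ := min (ε/2) (L - σ) with hδdef
    have hδpos : 0 < δ := lt_min (by linarith) (by linarith)
    have hδL : σ + δ ≤ L := by
      have := min_le_right (ε/2) (L - σ); simp only [hδdef]; linarith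
    have hδsmall : (∫ u in σ..(σ + δ), |k u|) < 1/2 := by
      apply hball
      have h1 : δ ≤ ε/2 := min_le_left _ _
      simp only [Real.dist_eq, sub_zero]
      rw [abs_of_pos hδpos]; linarith
    -- maximum of |φ| on [σ, σ+δ]
    obtain ⟨s₁, hs₁mem, hs₁max⟩ :=
      isCompact_Icc.exists_isMaxOn (α := ℝ) (β := ℝ)
        (Set.nonempty_Icc.2 (by linarith : σ ≤ σ + δ))
        (hφ.abs.continuousOn : ContinuousOn (fun u => |φ u|) (Icc σ (σ + δ)))
    have hmax : ∀ u ∈ Icc σ (σ + δ), |φ u| ≤ |φ s₁| := hs₁max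
    have hs₁L : s₁ ∈ Icc 0 L := ⟨le_trans hσ0 hs₁mem.1, le_trans hs₁mem.2 hδL⟩
    -- the key estimate
    have key : |φ s₁| ≤ (1/2) * |φ s₁| := by
      have e1 : φ s₁ = ∫ u in (0:ℝ)..s₁, k u * φ u := hint s₁ hs₁L
      have e2 : (∫ u in (0:ℝ)..σ, k u * φ u) = 0 := by
        rw [intervalIntegral.integral_congr (g := fun _ => (0:ℝ)) ?_]
        · simp
        · intro t ht
          rw [uIcc_of_le hσ0] at ht
          exact mul_eq_zero_of_right _ (hvan t ht)
      have e3 : φ s₁ = ∫ u in σ..s₁, k u * φ u := by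
        rw [e1, ← intervalIntegral.integral_add_adjacent_intervals (hkφ 0 σ) (hkφ σ s₁), e2,
          zero_add]
      have e4 : |φ s₁| ≤ ∫ u in σ..s₁, |k u * φ u| := by
        rw [e3]
        exact intervalIntegral.abs_integral_le_integral_abs hs₁mem.1
      have e5 : (∫ u in σ..s₁, |k u * φ u|) ≤ ∫ u in σ..s₁, |k u| * |φ s₁| := by
        apply intervalIntegral.integral_mono_on hs₁mem.1 (hkφ σ s₁).abs
          ((habs σ s₁).mul_const _)
        intro x hx
        rw [abs_mul]
        exact mul_le_mul_of_nonneg_left (hmax x ⟨hx.1, le_trans hx.2 hs₁mem.2⟩) (abs_nonneg _)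
      have e6 : (∫ u in σ..s₁, |k u| * |φ s₁|) = (∫ u in σ..s₁, |k u|) * |φ s₁| :=
        intervalIntegral.integral_mul_const _ _
      have e7 : (∫ u in σ..s₁, |k u|) ≤ ∫ u in σ..(σ + δ), |k u| := by
        rw [← intervalIntegral.integral_add_adjacent_intervals (habs σ s₁) (habs s₁ (σ + δ))]
        have : 0 ≤ ∫ u in s₁..(σ + δ), |k u| :=
          intervalIntegral.integral_nonneg hs₁mem.2 (fun u _ => abs_nonneg _)
        linarith
      calc |φ s₁| ≤ (∫ u in σ..s₁, |k u|) * |φ s₁| := by rw [← e6]; exact le_trans e4 e5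
        _ ≤ (1/2) * |φ s₁| := by
            apply mul_le_mul_of_nonneg_right _ (abs_nonneg _)
            linarith
    have hzero : |φ s₁| = 0 := by
      have := abs_nonneg (φ s₁); linarith
    -- so φ vanishes on [σ, σ+δ], hence σ+δ ∈ A
    have hAmem : σ + δ ∈ A := by
      refine ⟨⟨by linarith, hδL⟩, fun u hu => ?_⟩
      rcases le_or_gt u σ with h' | h'
      · exact hvan u ⟨hu.1, h'⟩
      · have := hmax u ⟨h'.le, hu.2⟩
        rw [hzero] at this
        exact abs_eq_zero.1 (le_antisymm this (abs_nonneg _))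
    have : σ + δ ≤ σ := le_csSup hbdd hAmem
    linarith
  intro s hs
  exact hvan s ⟨hs.1, by rw [hσeq]; exact hs.2⟩

namespace RadAux

variable (b : Module.Basis (Fin 2) ℝ X)

/-- The coordinate functionals as continuous linear maps. -/
def cL (i : Fin 2) : X →L[ℝ] ℝ :=
  haveI := b.finiteDimensional_of_finite
  LinearMap.toContinuousLinearMap (b.coord i)

lemma cL_apply (i : Fin 2) (x : X) : cL b i x = b.repr x i := rfl

lemma cL_expV0 (t : ℝ) : cL b 0 (expV b t) = Real.cos t := by
  simp [cL_apply, expV]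

lemma cL_expV1 (t : ℝ) : cL b 1 (expV b t) = Real.sin t := by
  simp [cL_apply, expV]

lemma expV_ne_zero (t : ℝ) : expV b t ≠ 0 := by
  intro h
  have hc : Real.cos t = 0 := by
    have := congrArg (cL b 0) h; rwa [cL_expV0, map_zero] at this
  have hs : Real.sin t = 0 := by
    have := congrArg (cL b 1) h; rwa [cL_expV1, map_zero] at this
  have := Real.sin_sq_add_cos_sq t
  rw [hc, hs] at this; norm_num at this

lemma norm_expV_pos (t : ℝ) : 0 < ‖expV b t‖ := norm_pos_iff.2 (expV_ne_zero b t)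

lemma norm_polarParam (t : ℝ) : ‖polarParam b t‖ = 1 := by
  rw [polarParam, norm_smul, norm_inv, norm_norm,
    inv_mul_cancel₀ (ne_of_gt (norm_expV_pos b t))]

lemma norm_natParam (s : ℝ) : ‖natParam b s‖ = 1 := norm_polarParam b _

/-- `B` bounds the norm of any unit-coefficient combination. -/
def Bc : ℝ := ‖b 0‖ + ‖b 1‖

lemma Bc_pos : 0 < Bc b := by
  have h0 : b 0 ≠ 0 := b.ne_zero 0
  have := norm_pos_iff.2 h0
  have := norm_nonneg (b 1)
  unfold Bc; linarith

lemma norm_combo_le (a c : ℝ) (ha : |a| ≤ 1) (hc : |c| ≤ 1) :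
    ‖a • b 0 + c • b 1‖ ≤ Bc b := by
  calc ‖a • b 0 + c • b 1‖ ≤ ‖a • b 0‖ + ‖c • b 1‖ := norm_add_le _ _
    _ = |a| * ‖b 0‖ + |c| * ‖b 1‖ := by rw [norm_smul, norm_smul]; rfl
    _ ≤ 1 * ‖b 0‖ + 1 * ‖b 1‖ := by
        have h0 := norm_nonneg (b 0); have h1 := norm_nonneg (b 1); nlinarith
    _ = Bc b := by rw [one_mul, one_mul]; rfl

lemma norm_expV_le (t : ℝ) : ‖expV b t‖ ≤ Bc b :=
  norm_combo_le b _ _ (Real.abs_cos_le_one t) (Real.abs_sin_le_one t)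

lemma hasDerivAt_expV (t : ℝ) :
    HasDerivAt (expV b) (-Real.sin t • b 0 + Real.cos t • b 1) t := by
  exact ((Real.hasDerivAt_cos t).smul_const (b 0)).add
    ((Real.hasDerivAt_sin t).smul_const (b 1))

def Kc : ℝ := ‖cL b 0‖ + ‖cL b 1‖

lemma one_le_Kc_mul_norm (t : ℝ) : 1 ≤ Kc b * ‖expV b t‖ := by
  have h1 : Real.sin t ^ 2 ≤ |Real.sin t| := by
    nlinarith [Real.abs_sin_le_one t, abs_nonneg (Real.sin t), sq_abs (Real.sin t)]
  have h2 : Real.cos t ^ 2 ≤ |Real.cos t| := by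
    nlinarith [Real.abs_cos_le_one t, abs_nonneg (Real.cos t), sq_abs (Real.cos t)]
  have h3 : |Real.cos t| ≤ ‖cL b 0‖ * ‖expV b t‖ := by
    rw [← cL_expV0 b t, ← Real.norm_eq_abs]
    exact (cL b 0).le_opNorm _
  have h4 : |Real.sin t| ≤ ‖cL b 1‖ * ‖expV b t‖ := by
    rw [← cL_expV1 b t, ← Real.norm_eq_abs]
    exact (cL b 1).le_opNorm _
  have := Real.sin_sq_add_cos_sq t
  unfold Kc; nlinarith

lemma Kc_pos : 0 < Kc b := by
  have h := one_le_Kc_mul_norm b 0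
  have h2 := norm_expV_pos b 0
  have h3 := norm_expV_le b 0
  have h4 := Bc_pos b
  nlinarith

lemma inv_Kc_le_norm_expV (t : ℝ) : (Kc b)⁻¹ ≤ ‖expV b t‖ := by
  rw [inv_eq_one_div, div_le_iff₀ (Kc_pos b), mul_comm]
  exact one_le_Kc_mul_norm b t

lemma inv_norm_expV_le (t : ℝ) : ‖expV b t‖⁻¹ ≤ Kc b := by
  rw [inv_le_comm₀ (norm_expV_pos b t) (Kc_pos b)]
  exact inv_Kc_le_norm_expV b t

lemma expV_lipschitz : LipschitzWith (Bc b).toNNReal (expV b) := by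
  apply lipschitzWith_of_nnnorm_deriv_le
  · exact fun t => (hasDerivAt_expV b t).differentiableAt
  · intro t
    rw [(hasDerivAt_expV b t).deriv]
    have h := norm_combo_le b (-Real.sin t) (Real.cos t)
      (by rw [abs_neg]; exact Real.abs_sin_le_one t) (Real.abs_cos_le_one t)
    rw [← norm_toNNReal]
    exact Real.toNNReal_mono h

lemma norm_expV_sub_le (t s : ℝ) : ‖expV b t - expV b s‖ ≤ Bc b * |t - s| := by
  have := (expV_lipschitz b).dist_le_mul t s
  rw [dist_eq_norm, Real.dist_eq] at this
  rwa [Real.coe_toNNReal _ (Bc_pos b).le] at this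


/-- Lipschitz bound for `‖expV‖`. -/
lemma normExpV_lipschitz : LipschitzWith (Bc b).toNNReal (fun t => ‖expV b t‖) := by
  have := lipschitzWith_one_norm.comp (expV_lipschitz b)
  simpa [Function.comp_def] using this

/-- The polar parameterization is Lipschitz. -/
def Mc : ℝ := Bc b ^ 2 * Kc b ^ 2 + Bc b * Kc b

lemma Mc_pos : 0 < Mc b := by
  have := Bc_pos b; have := Kc_pos b; unfold Mc; nlinarith

lemma polar_lipschitz : LipschitzWith (Mc b).toNNReal (polarParam b) := by
  apply LipschitzWith.of_dist_le_mul
  intro t s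
  rw [dist_eq_norm, Real.dist_eq, Real.coe_toNNReal _ (Mc_pos b).le]
  have hNt := norm_expV_pos b t
  have hNs := norm_expV_pos b s
  have key : polarParam b t - polarParam b s
      = (‖expV b t‖⁻¹ - ‖expV b s‖⁻¹) • expV b t + ‖expV b s‖⁻¹ • (expV b t - expV b s) := by
    simp only [polarParam, sub_smul, smul_sub]; abel
  rw [key]
  have h1 : |‖expV b t‖⁻¹ - ‖expV b s‖⁻¹| ≤ Bc b * |t - s| * Kc b * Kc b := by
    have he : ‖expV b t‖⁻¹ - ‖expV b s‖⁻¹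
        = (‖expV b s‖ - ‖expV b t‖) * (‖expV b t‖⁻¹ * ‖expV b s‖⁻¹) := by
      field_simp
    rw [he, abs_mul]
    have h2 : |‖expV b s‖ - ‖expV b t‖| ≤ Bc b * |t - s| := by
      have := abs_norm_sub_norm_le (expV b s) (expV b t)
      have h3 := norm_expV_sub_le b s t
      rw [abs_sub_comm t s]
      linarith
    have h4 : |‖expV b t‖⁻¹ * ‖expV b s‖⁻¹| ≤ Kc b * Kc b := by
      rw [abs_mul, abs_of_pos (inv_pos.2 hNt), abs_of_pos (inv_pos.2 hNs)]
      have := inv_norm_expV_le b t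
      have := inv_norm_expV_le b s
      have := inv_pos.2 hNt
      have := inv_pos.2 hNs
      nlinarith
    have h5 : (0:ℝ) ≤ |‖expV b s‖ - ‖expV b t‖| := abs_nonneg _
    have h6 : (0:ℝ) ≤ |‖expV b t‖⁻¹ * ‖expV b s‖⁻¹| := abs_nonneg _
    have h7 : (0:ℝ) ≤ Bc b * |t - s| := mul_nonneg (Bc_pos b).le (abs_nonneg _)
    nlinarith
  calc ‖(‖expV b t‖⁻¹ - ‖expV b s‖⁻¹) • expV b t + ‖expV b s‖⁻¹ • (expV b t - expV b s)‖
      ≤ ‖(‖expV b t‖⁻¹ - ‖expV b s‖⁻¹) • expV b t‖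
        + ‖‖expV b s‖⁻¹ • (expV b t - expV b s)‖ := norm_add_le _ _
    _ = |‖expV b t‖⁻¹ - ‖expV b s‖⁻¹| * ‖expV b t‖
        + |‖expV b s‖⁻¹| * ‖expV b t - expV b s‖ := by
        rw [norm_smul, norm_smul, Real.norm_eq_abs, Real.norm_eq_abs]
    _ ≤ (Bc b * |t - s| * Kc b * Kc b) * Bc b + Kc b * (Bc b * |t - s|) := by
        have h8 := norm_expV_le b t
        have h9 := norm_expV_sub_le b t s
        have h10 : |‖expV b s‖⁻¹| ≤ Kc b := by
          rw [abs_of_pos (inv_pos.2 hNs)]; exact inv_norm_expV_le b s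
        have := abs_nonneg (t - s)
        have := Kc_pos b
        have := Bc_pos b
        have h11 : (0:ℝ) ≤ |‖expV b t‖⁻¹ - ‖expV b s‖⁻¹| := abs_nonneg _
        have h12 : ‖expV b t - expV b s‖ ≥ 0 := norm_nonneg _
        nlinarith
    _ ≤ Mc b * |t - s| := by unfold Mc; ring_nf; nlinarith [abs_nonneg (t-s), Kc_pos b, Bc_pos b]

/-- A Lipschitz function has right derivatives bounded by the Lipschitz constant. -/
lemma norm_derivWithin_Ici_le {f : ℝ → X} {K : NNReal} (hf : LipschitzWith K f) (u : ℝ) :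
    ‖derivWithin f (Ici u) u‖ ≤ K := by
  by_cases h : DifferentiableWithinAt ℝ f (Ici u) u
  · have hd := h.hasDerivWithinAt
    rw [hasDerivWithinAt_iff_tendsto_slope] at hd
    have hne : (𝓝[(Ici u) \ {u}] u).NeBot := by
      rw [Ici_sdiff_left]
      exact nhdsGT_neBot u
    refine le_of_tendsto hd.norm (Eventually.of_forall (fun t => ?_))
    rcases eq_or_ne t u with rfl | htu
    · simp [slope_def_module]
    · rw [slope_def_module, norm_smul, Real.norm_eq_abs, abs_inv]
      have h1 := hf.dist_le_mul t u
      rw [dist_eq_norm, Real.dist_eq] at h1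
      have h2 : |t - u| > 0 := abs_pos.2 (sub_ne_zero.2 htu)
      rw [inv_mul_le_iff₀ h2]
      linarith
  · rw [derivWithin_zero_of_not_differentiableWithinAt h]
    simp


lemma cL_combo0 (a c : ℝ) : cL b 0 (a • b 0 + c • b 1) = a := by simp [cL_apply]

lemma cL_combo1 (a c : ℝ) : cL b 1 (a • b 0 + c • b 1) = c := by simp [cL_apply]

/-- Almost-everywhere lower bound on the right derivative of the polar parameterization. -/
lemma ae_lower_bound :
    ∀ᵐ u : ℝ, (Kc b * Bc b)⁻¹ ≤ ‖rightDeriv (polarParam b) u‖ := by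
  haveI := b.finiteDimensional_of_finite
  filter_upwards [(normExpV_lipschitz b).ae_differentiableAt] with u hu
  have hNpos := norm_expV_pos b u
  have hd : HasDerivAt (fun t => ‖expV b t‖) (deriv (fun t => ‖expV b t‖) u) u :=
    hu.hasDerivAt
  set d0 : ℝ := deriv (fun t => ‖expV b t‖) u with hd0
  have hinv : HasDerivAt (fun t => ‖expV b t‖⁻¹) (-d0 / ‖expV b u‖ ^ 2) u :=
    hd.inv (ne_of_gt hNpos)
  set d1 : ℝ := -d0 / ‖expV b u‖ ^ 2 with hd1
  set v : X := ‖expV b u‖⁻¹ • (-Real.sin u • b 0 + Real.cos u • b 1) + d1 • expV b u with hv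
  have hp : HasDerivAt (polarParam b) v u := hinv.smul (hasDerivAt_expV b u)
  have hrd : rightDeriv (polarParam b) u = v :=
    hp.hasDerivWithinAt.derivWithin (uniqueDiffOn_Ici u u self_mem_Ici)
  have hc0 : cL b 0 v = ‖expV b u‖⁻¹ * (-Real.sin u) + d1 * Real.cos u := by
    rw [hv, map_add, (cL b 0).map_smul, (cL b 0).map_smul, cL_expV0, cL_combo0]
    simp [smul_eq_mul]
  have hc1 : cL b 1 v = ‖expV b u‖⁻¹ * Real.cos u + d1 * Real.sin u := by
    rw [hv, map_add, (cL b 1).map_smul, (cL b 1).map_smul, cL_expV1, cL_combo1]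
    simp [smul_eq_mul]
  have key : Real.cos u * cL b 1 v - Real.sin u * cL b 0 v = ‖expV b u‖⁻¹ := by
    rw [hc0, hc1]
    linear_combination (‖expV b u‖)⁻¹ * (Real.sin_sq_add_cos_sq u)
  have e1 : Real.cos u * cL b 1 v ≤ |cL b 1 v| := by
    calc Real.cos u * cL b 1 v ≤ |Real.cos u * cL b 1 v| := le_abs_self _
      _ = |Real.cos u| * |cL b 1 v| := abs_mul _ _
      _ ≤ 1 * |cL b 1 v| := mul_le_mul_of_nonneg_right (Real.abs_cos_le_one u) (abs_nonneg _)
      _ = |cL b 1 v| := one_mul _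
  have e2 : -(Real.sin u * cL b 0 v) ≤ |cL b 0 v| := by
    calc -(Real.sin u * cL b 0 v) ≤ |(Real.sin u * cL b 0 v)| := neg_le_abs _
      _ = |Real.sin u| * |cL b 0 v| := abs_mul _ _
      _ ≤ 1 * |cL b 0 v| := mul_le_mul_of_nonneg_right (Real.abs_sin_le_one u) (abs_nonneg _)
      _ = |cL b 0 v| := one_mul _
  have h5 : ‖expV b u‖⁻¹ ≤ |cL b 1 v| + |cL b 0 v| := by linarith [key]
  have h6 : |cL b 0 v| ≤ ‖cL b 0‖ * ‖v‖ := by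
    rw [← Real.norm_eq_abs]; exact (cL b 0).le_opNorm v
  have h7 : |cL b 1 v| ≤ ‖cL b 1‖ * ‖v‖ := by
    rw [← Real.norm_eq_abs]; exact (cL b 1).le_opNorm v
  have h8 : (Bc b)⁻¹ ≤ ‖expV b u‖⁻¹ := by
    have := one_div_le_one_div_of_le hNpos (norm_expV_le b u)
    simpa [one_div] using this
  have h9 : (Bc b)⁻¹ ≤ Kc b * ‖v‖ := by
    have : ‖expV b u‖⁻¹ ≤ Kc b * ‖v‖ := by
      unfold Kc
      calc ‖expV b u‖⁻¹ ≤ |cL b 1 v| + |cL b 0 v| := h5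
        _ ≤ ‖cL b 1‖ * ‖v‖ + ‖cL b 0‖ * ‖v‖ := add_le_add h7 h6
        _ = (‖cL b 0‖ + ‖cL b 1‖) * ‖v‖ := by ring
    linarith
  rw [hrd]
  have hK := Kc_pos b
  have hB := Bc_pos b
  rw [mul_inv]
  calc (Kc b)⁻¹ * (Bc b)⁻¹ ≤ (Kc b)⁻¹ * (Kc b * ‖v‖) :=
        mul_le_mul_of_nonneg_left h9 (inv_nonneg.2 hK.le)
    _ = ‖v‖ := by field_simp

lemma rightDeriv_polar_norm_le (u : ℝ) :
    ‖rightDeriv (polarParam b) u‖ ≤ ((Mc b).toNNReal : ℝ) :=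
  norm_derivWithin_Ici_le (polar_lipschitz b) u

lemma qIntegrable (a c : ℝ) :
    IntervalIntegrable (fun u => ‖rightDeriv (polarParam b) u‖) volume a c := by
  haveI := b.finiteDimensional_of_finite
  haveI : CompleteSpace X := FiniteDimensional.complete ℝ X
  rw [intervalIntegrable_iff]
  apply MeasureTheory.Integrable.mono' (g := fun _ : ℝ => ((Mc b).toNNReal : ℝ))
  · exact integrableOn_const measure_Ioc_lt_top.ne
  · exact ((stronglyMeasurable_derivWithin_Ici (polarParam b)).norm).aestronglyMeasurable.restrict
  · refine ae_of_all _ (fun u => ?_)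
    rw [Real.norm_eq_abs, abs_of_nonneg (norm_nonneg _)]
    exact rightDeriv_polar_norm_le b u

lemma arcLen_zero : arcLen b 0 = 0 := intervalIntegral.integral_same

lemma arcLen_strictMono : StrictMono (arcLen b) := by
  intro a c hac
  have hadd : arcLen b a + ∫ u in a..c, ‖rightDeriv (polarParam b) u‖ = arcLen b c :=
    intervalIntegral.integral_add_adjacent_intervals (qIntegrable b 0 a) (qIntegrable b a c)
  have hconst : (∫ _ in a..c, (Kc b * Bc b)⁻¹) = (Kc b * Bc b)⁻¹ * (c - a) := by
    rw [intervalIntegral.integral_const, smul_eq_mul, mul_comm]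
  have hlow : (Kc b * Bc b)⁻¹ * (c - a) ≤ ∫ u in a..c, ‖rightDeriv (polarParam b) u‖ := by
    rw [← hconst]
    exact intervalIntegral.integral_mono_ae hac.le intervalIntegrable_const
      (qIntegrable b a c) (ae_lower_bound b)
  have hm : 0 < (Kc b * Bc b)⁻¹ := inv_pos.2 (mul_pos (Kc_pos b) (Bc_pos b))
  nlinarith

lemma arcInv_arcLen (t : ℝ) : arcInv b (arcLen b t) = t :=
  Function.leftInverse_invFun (arcLen_strictMono b).injective t

lemma natParam_arcLen (t : ℝ) : natParam b (arcLen b t) = polarParam b t := by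
  rw [natParam, Function.comp_apply, arcInv_arcLen]

lemma natParam_zero : natParam b 0 = polarParam b 0 := by
  have := natParam_arcLen b 0
  rwa [arcLen_zero] at this

lemma polarParam_pi : polarParam b Real.pi = - polarParam b 0 := by
  have he : expV b Real.pi = - expV b 0 := by simp [expV]
  rw [polarParam, polarParam, he, norm_neg, smul_neg]

lemma natParam_halfLen : natParam b (halfLen b) = - natParam b 0 := by
  rw [halfLen, natParam_arcLen, polarParam_pi, ← natParam_zero]

lemma halfLen_pos : 0 < halfLen b := by
  have := arcLen_strictMono b (show (0:ℝ) < Real.pi from Real.pi_pos)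
  rwa [arcLen_zero] at this

lemma eq_combo (z : X) : z = b.repr z 0 • b 0 + b.repr z 1 • b 1 := by
  have := b.sum_repr z
  rw [Fin.sum_univ_two] at this
  exact this.symm

end RadAux

/-- The integral of the radial curvature over a half-period is strictly positive. -/
theorem integral_radial_curvature_pos [CompleteSpace X] (b : Module.Basis (Fin 2) ℝ X)
    (hdiff : Differentiable ℝ (natParam b))
    (g : ℝ → X) (hac : LocAC (deriv (natParam b)) g)
    (ρ τ : ℝ → ℝ) (hρ : LocallyIntegrable ρ volume) (hτ : LocallyIntegrable τ volume)
    (heq : ∀ᵐ s : ℝ, g s = (-ρ s) • natParam b s + τ s • deriv (natParam b) s)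
    (hpos : ∀ᵐ s : ℝ, 0 ≤ ρ s) :
    0 < ∫ s in (0:ℝ)..(halfLen b), ρ s := by
  classical
  have hL : 0 < halfLen b := RadAux.halfLen_pos b
  set L := halfLen b with hLdef
  -- interval integrability of the data
  have hρint : ∀ a c : ℝ, IntervalIntegrable ρ volume a c := fun a c =>
    (hρ.integrableOn_isCompact isCompact_uIcc).intervalIntegrable
  have hτint : ∀ a c : ℝ, IntervalIntegrable τ volume a c := fun a c =>
    (hτ.integrableOn_isCompact isCompact_uIcc).intervalIntegrable
  have hgint : ∀ a c : ℝ, IntervalIntegrable g volume a c := fun a c =>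
    (hac.2.1.integrableOn_isCompact isCompact_uIcc).intervalIntegrable
  by_contra hcon
  push_neg at hcon
  have hnonneg : 0 ≤ ∫ s in (0:ℝ)..L, ρ s :=
    intervalIntegral.integral_nonneg_of_ae hL.le (by filter_upwards [hpos] with s hs; exact hs)
  have hzero : (∫ s in (0:ℝ)..L, ρ s) = 0 := le_antisymm hcon hnonneg
  -- ρ vanishes a.e. on (0, L]
  have hρ0 : ρ =ᵐ[volume.restrict (Set.Ioc 0 L)] 0 := by
    have hint : IntegrableOn ρ (Set.Ioc 0 L) volume :=
      (intervalIntegrable_iff_integrableOn_Ioc_of_le hL.le).1 (hρint 0 L)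
    have h0 : (0:ℝ→ℝ) ≤ᵐ[volume.restrict (Set.Ioc 0 L)] ρ :=
      ae_restrict_of_ae (by filter_upwards [hpos] with s hs; exact hs)
    refine (MeasureTheory.integral_eq_zero_iff_of_nonneg_ae h0 hint).1 ?_
    rw [← intervalIntegral.integral_of_le hL.le]
    exact hzero
  set r : ℝ → X := natParam b with hrdef
  set r' : ℝ → X := deriv (natParam b) with hr'def
  -- the ODE becomes r'' = τ r' a.e. on (0, L]
  have hgae : ∀ᵐ s ∂(volume.restrict (Set.Ioc 0 L)), g s = τ s • r' s := by
    filter_upwards [ae_restrict_of_ae heq, hρ0] with s h1 h2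
    have h2' : ρ s = 0 := h2
    rw [h1, h2']
    simp
  have hgae' : ∀ᵐ u : ℝ, u ∈ Set.Ioc 0 L → g u = τ u • r' u :=
    (ae_restrict_iff' measurableSet_Ioc).1 hgae
  -- r' is continuous
  have hr'eq : ∀ s, r' s = r' 0 + ∫ u in (0:ℝ)..s, g u := by
    intro s
    rcases le_total 0 s with h | h
    · exact sub_eq_iff_eq_add'.1 (hac.2.2 0 s h)
    · have h1 := hac.2.2 s 0 h
      have h2 : r' s = r' 0 - ∫ u in s..(0:ℝ), g u := by
        rw [← h1]; abel
      rw [h2, intervalIntegral.integral_symm]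
      abel
  have hr'cont : Continuous r' := by
    have hc : Continuous (fun s => r' 0 + ∫ u in (0:ℝ)..s, g u) :=
      continuous_const.add (intervalIntegral.continuous_primitive hgint 0)
    exact hc.congr (fun s => (hr'eq s).symm)
  -- FTC for r
  have hrFTC : ∀ s : ℝ, r s - r 0 = ∫ u in (0:ℝ)..s, r' u :=
    fun s => (intervalIntegral.integral_deriv_eq_sub (fun x _ => hdiff x)
      (hr'cont.intervalIntegrable 0 s)).symm
  -- coordinates of r'' = τ r'
  have hkey : ∀ (f : X →L[ℝ] ℝ), ∀ s ∈ Icc (0:ℝ) L,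
      f (r' s) = f (r' 0) + ∫ u in (0:ℝ)..s, τ u * f (r' u) := by
    intro f s hs
    have h1 : r' s - r' 0 = ∫ u in (0:ℝ)..s, g u := hac.2.2 0 s hs.1
    have h2 : f (r' s) - f (r' 0) = ∫ u in (0:ℝ)..s, f (g u) := by
      rw [ContinuousLinearMap.intervalIntegral_comp_comm f (hgint 0 s), ← h1, map_sub]
    have h3 : (∫ u in (0:ℝ)..s, f (g u)) = ∫ u in (0:ℝ)..s, τ u * f (r' u) := by
      apply intervalIntegral.integral_congr_ae
      filter_upwards [hgae'] with u hu hu2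
      rw [Set.uIoc_of_le hs.1] at hu2
      rw [hu ⟨hu2.1, hu2.2.trans hs.2⟩, ContinuousLinearMap.map_smul, smul_eq_mul]
    have := h2.trans h3
    linarith
  -- the Wronskian-type function
  set X0 : ℝ := RadAux.cL b 0 (r' 0) with hX0def
  set Y0 : ℝ := RadAux.cL b 1 (r' 0) with hY0def
  set w : ℝ → ℝ := fun s => X0 * RadAux.cL b 1 (r' s) - Y0 * RadAux.cL b 0 (r' s) with hwdef
  have hwcont : Continuous w :=
    (continuous_const.mul ((RadAux.cL b 1).continuous.comp hr'cont)).sub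
      (continuous_const.mul ((RadAux.cL b 0).continuous.comp hr'cont))
  have hwvol : ∀ s ∈ Icc (0:ℝ) L, w s = ∫ u in (0:ℝ)..s, τ u * w u := by
    intro s hs
    have h0 := hkey (RadAux.cL b 0) s hs
    have h1 := hkey (RadAux.cL b 1) s hs
    have hτx : IntervalIntegrable (fun u => τ u * RadAux.cL b 0 (r' u)) volume 0 s :=
      (hτint 0 s).mul_continuousOn ((RadAux.cL b 0).continuous.comp hr'cont).continuousOn
    have hτy : IntervalIntegrable (fun u => τ u * RadAux.cL b 1 (r' u)) volume 0 s :=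
      (hτint 0 s).mul_continuousOn ((RadAux.cL b 1).continuous.comp hr'cont).continuousOn
    have hsplit : (∫ u in (0:ℝ)..s, τ u * w u)
        = X0 * (∫ u in (0:ℝ)..s, τ u * RadAux.cL b 1 (r' u))
          - Y0 * (∫ u in (0:ℝ)..s, τ u * RadAux.cL b 0 (r' u)) := by
      rw [show (fun u => τ u * w u)
          = fun u => X0 * (τ u * RadAux.cL b 1 (r' u)) - Y0 * (τ u * RadAux.cL b 0 (r' u)) from
        funext fun u => by simp only [hwdef]; ring]
      rw [intervalIntegral.integral_sub (hτy.const_mul _) (hτx.const_mul _),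
        intervalIntegral.integral_const_mul, intervalIntegral.integral_const_mul]
    simp only [hwdef]
    rw [hsplit, h0, h1]
    ring
  have hw0 : ∀ s ∈ Icc (0:ℝ) L, w s = 0 := volterra_zero w τ L hL.le hwcont hτint hwvol
  -- a little coordinate lemma
  have hcoord : ∀ z z' : X, RadAux.cL b 0 z = RadAux.cL b 0 z' →
      RadAux.cL b 1 z = RadAux.cL b 1 z' → z = z' := by
    intro z z' h0 h1
    rw [RadAux.eq_combo b z, RadAux.eq_combo b z', ← RadAux.cL_apply b 0 z,
      ← RadAux.cL_apply b 1 z, ← RadAux.cL_apply b 0 z', ← RadAux.cL_apply b 1 z', h0, h1]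
  have hnorm1 : ∀ s, ‖r s‖ = 1 := fun s => RadAux.norm_natParam b s
  have hrL : r L = - r 0 := RadAux.natParam_halfLen b
  by_cases hr'0 : r' 0 = 0
  · -- degenerate case: r' ≡ 0 on [0, L]
    have hX0 : X0 = 0 := by rw [hX0def, hr'0, map_zero]
    have hY0 : Y0 = 0 := by rw [hY0def, hr'0, map_zero]
    have hx0 : ∀ s ∈ Icc (0:ℝ) L, RadAux.cL b 0 (r' s) = 0 := by
      apply volterra_zero _ τ L hL.le ((RadAux.cL b 0).continuous.comp hr'cont) hτint
      intro s hs
      have := hkey (RadAux.cL b 0) s hs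
      rw [← hX0def, hX0, zero_add] at this
      exact this
    have hy0 : ∀ s ∈ Icc (0:ℝ) L, RadAux.cL b 1 (r' s) = 0 := by
      apply volterra_zero _ τ L hL.le ((RadAux.cL b 1).continuous.comp hr'cont) hτint
      intro s hs
      have := hkey (RadAux.cL b 1) s hs
      rw [← hY0def, hY0, zero_add] at this
      exact this
    have hr'zero : ∀ s ∈ Icc (0:ℝ) L, r' s = 0 := by
      intro s hs
      apply hcoord
      · rw [hx0 s hs, map_zero]
      · rw [hy0 s hs, map_zero]
    have hconst : r L - r 0 = 0 := by
      rw [hrFTC L]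
      rw [intervalIntegral.integral_congr (g := fun _ => (0:X)) ?_]
      · simp
      · intro u hu
        rw [Set.uIcc_of_le hL.le] at hu
        exact hr'zero u hu
    rw [hrL] at hconst
    have hr0 : r 0 = 0 := by
      have h2 : (-2 : ℝ) • r 0 = 0 := by
        rw [show ((-2:ℝ)) • r 0 = -r 0 - r 0 by rw [neg_smul, two_smul]; abel]
        exact hconst
      rcases smul_eq_zero.1 h2 with h | h
      · norm_num at h
      · exact h
    have := hnorm1 0
    rw [hr0, norm_zero] at this
    norm_num at this
  · -- main case
    have hXY : X0 ≠ 0 ∨ Y0 ≠ 0 := by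
      by_contra hc
      push_neg at hc
      exact hr'0 (by
        apply hcoord
        · rw [← hX0def, hc.1, map_zero]
        · rw [← hY0def, hc.2, map_zero])
    obtain ⟨c, hccont, hc0, hc⟩ : ∃ c : ℝ → ℝ, Continuous c ∧ c 0 = 1 ∧
        ∀ s ∈ Icc (0:ℝ) L, r' s = c s • r' 0 := by
      rcases hXY with hX | hY
      · refine ⟨fun s => RadAux.cL b 0 (r' s) / X0,
          ((RadAux.cL b 0).continuous.comp hr'cont).div_const _, by
            simp only [← hX0def]; field_simp, ?_⟩
        intro s hs
        have hw := hw0 s hs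
        simp only [hwdef] at hw
        apply hcoord
        · rw [ContinuousLinearMap.map_smul, smul_eq_mul, ← hX0def]
          field_simp
        · rw [ContinuousLinearMap.map_smul, smul_eq_mul, ← hY0def]
          field_simp
          linarith [hw]
      · refine ⟨fun s => RadAux.cL b 1 (r' s) / Y0,
          ((RadAux.cL b 1).continuous.comp hr'cont).div_const _, by
            simp only [← hY0def]; field_simp, ?_⟩
        intro s hs
        have hw := hw0 s hs
        simp only [hwdef] at hw
        apply hcoord
        · rw [ContinuousLinearMap.map_smul, smul_eq_mul, ← hX0def]
          field_simp
          linarith [hw]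
        · rw [ContinuousLinearMap.map_smul, smul_eq_mul, ← hY0def]
          field_simp
    set Cc : ℝ → ℝ := fun s => ∫ u in (0:ℝ)..s, c u with hCcdef
    have hCcont : Continuous Cc :=
      intervalIntegral.continuous_primitive (fun a c' => hccont.intervalIntegrable a c') 0
    have hCc0 : Cc 0 = 0 := intervalIntegral.integral_same
    have hrs : ∀ s ∈ Icc (0:ℝ) L, r s = r 0 + Cc s • r' 0 := by
      intro s hs
      have h1 : r s - r 0 = ∫ u in (0:ℝ)..s, r' u := hrFTC s
      have h2 : (∫ u in (0:ℝ)..s, r' u) = ∫ u in (0:ℝ)..s, c u • r' 0 := by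
        apply intervalIntegral.integral_congr
        intro u hu
        rw [Set.uIcc_of_le hs.1] at hu
        exact hc u ⟨hu.1, hu.2.trans hs.2⟩
      have h3 : (∫ u in (0:ℝ)..s, c u • r' 0) = Cc s • r' 0 :=
        intervalIntegral.integral_smul_const _ _
      rw [h2, h3] at h1
      exact sub_eq_iff_eq_add'.1 h1
    have hL2 : Cc L • r' 0 = (-2 : ℝ) • r 0 := by
      have h1 := hrs L ⟨hL.le, le_rfl⟩
      rw [hrL] at h1
      rw [show ((-2:ℝ)) • r 0 = -r 0 - r 0 by rw [neg_smul, two_smul]; abel]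
      rw [h1]; abel
    have hCL : Cc L ≠ 0 := by
      intro h0
      rw [h0, zero_smul] at hL2
      have hr0 : r 0 = 0 := by
        rcases smul_eq_zero.1 hL2.symm with h | h
        · norm_num at h
        · exact h
      have := hnorm1 0
      rw [hr0, norm_zero] at this
      norm_num at this
    have hr'0eq : r' 0 = (Cc L)⁻¹ • ((-2:ℝ) • r 0) := by
      rw [← hL2, smul_smul, inv_mul_cancel₀ hCL, one_smul]
    have hform : ∀ s ∈ Icc (0:ℝ) L, r s = (1 - 2 * Cc s / Cc L) • r 0 := by
      intro s hs
      have hgen : ∀ (a : ℝ) (v : X), v + a • v = (1 + a) • v := fun a v => by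
        rw [add_smul, one_smul]
      rw [hrs s hs, hr'0eq, smul_smul, smul_smul, hgen]
      congr 1
      field_simp
      ring
    set q : ℝ → ℝ := fun s => 1 - 2 * Cc s / Cc L with hqdef
    have hq0 : q 0 = 1 := by simp [hqdef, hCc0]
    have hqL : q L = -1 := by
      simp only [hqdef]
      field_simp
      norm_num
    have hqcont : ContinuousOn q (Icc 0 L) :=
      (continuous_const.sub ((continuous_const.mul hCcont).div_const _)).continuousOn
    have hIVT := intermediate_value_Icc' hL.le hqcont
    have h0mem : (0:ℝ) ∈ Icc (q L) (q 0) := by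
      rw [hq0, hqL]; constructor <;> norm_num
    obtain ⟨s₂, hs₂, hqs₂⟩ := hIVT h0mem
    have hnorm := hnorm1 s₂
    have hq2 : 1 - 2 * Cc s₂ / Cc L = 0 := hqs₂
    rw [hform s₂ hs₂, hq2, zero_smul, norm_zero] at hnorm
    norm_num at hnorm

end
end
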